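/- arXiv:1809.07402 — 2 statements merged into one kernel-verified Lean document; each statement's English description precedes it below -/
import Mathlib

section
/- (Lemma 4). Fix a prior probability measure π on ℝ^m, δ > 0 and η > 0. With probability at least 1 − δ over the draw of n i.i.d. samples, the following holds simultaneously for every local optimum w* with ∇L̂(w*) = 0 such that L̂ is ρ-Hessian Lipschitz on Neigh_{γ,ε}(w*), and every random perturbation u with |u_i| ≤ κ_{γ,ε}(w*_i) almost surely for all i (no independence or zero-mean assumption): E_u[L(w*+u)] ≤ L̂(w*) + (1/2)·λ_max(∇²L̂(w*))·∑_{i=1}^m E[u_i²] + (ρ/6)·E[‖u‖³] + (KL(law(w*+u)‖π) + log(1/δ))/η + η/(2n), where λ_max denotes the largest eigenvalue. -/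
open MeasureTheory ProbabilityTheory

noncomputable section

open scoped Classical

/-- Kullback–Leibler divergence (in nats) between measures, valued in `EReal`
(`⊤` when `ρ` is not absolutely continuous w.r.t. `π` or the log-likelihood ratio
is not `ρ`-integrable). -/
def klDiv {α : Type*} [MeasurableSpace α] (ρ π : Measure α) : EReal :=
  if ρ ≪ π ∧ Integrable (llr ρ π) ρ then ((∫ x, llr ρ π x ∂ρ : ℝ) : EReal) else ⊤

/-- Euclidean norm on `Fin m → ℝ`. -/
def euclNorm {m : ℕ} (u : Fin m → ℝ) : ℝ := Real.sqrt (∑ i, (u i) ^ 2)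

/-- `κ_{γ,ε}(t) = γ|t| + ε`. -/
def kappa (γ ε t : ℝ) : ℝ := γ * |t| + ε

/-- `Neigh_{γ,ε}(w) = {v : |vᵢ − wᵢ| ≤ κ_{γ,ε}(wᵢ) ∀ i}`. -/
def Neigh {m : ℕ} (γ ε : ℝ) (w : Fin m → ℝ) : Set (Fin m → ℝ) :=
  {v | ∀ i, |v i - w i| ≤ kappa γ ε (w i)}

/-- `i`-th diagonal entry of the Hessian of `f` at `w`. -/
def hessDiag {m : ℕ} (f : (Fin m → ℝ) → ℝ) (w : Fin m → ℝ) (i : Fin m) : ℝ :=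
  iteratedFDeriv ℝ 2 f w ![Pi.single i 1, Pi.single i 1]

/-- `f` is twice differentiable and `ρ`-Hessian Lipschitz on `N`, i.e.
`‖∇²f(w₁) − ∇²f(w₂)‖ ≤ ρ‖w₁ − w₂‖` where `‖·‖` is the operator norm w.r.t. the
Euclidean norm (expressed by testing the bilinear form against all `u, v`). -/
def IsHessianLipschitzOn {m : ℕ} (f : (Fin m → ℝ) → ℝ) (ρ : ℝ) (N : Set (Fin m → ℝ)) : Prop :=
  ContDiffOn ℝ 2 f N ∧
    ∀ w₁ ∈ N, ∀ w₂ ∈ N, ∀ u v : Fin m → ℝ,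
      |iteratedFDeriv ℝ 2 f w₁ ![u, v] - iteratedFDeriv ℝ 2 f w₂ ![u, v]|
        ≤ ρ * euclNorm (w₁ - w₂) * euclNorm u * euclNorm v

/-- Expected loss `L(w) = E_{x ∼ 𝒟}[ℓ(w, x)]`. -/
def expLoss {S : Type*} [MeasurableSpace S] {m : ℕ} (ℓ : (Fin m → ℝ) → S → ℝ)
    (𝒟 : Measure S) (w : Fin m → ℝ) : ℝ := ∫ x, ℓ w x ∂𝒟

/-- Empirical loss `L̂(w) = (1/n) ∑ᵢ ℓ(w, sᵢ)`. -/
def empLoss {S : Type*} {m n : ℕ} (ℓ : (Fin m → ℝ) → S → ℝ) (s : Fin n → S)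
    (w : Fin m → ℝ) : ℝ := (n : ℝ)⁻¹ * ∑ i, ℓ w (s i)

/-- `λ_max(∇²f(w))`: the largest eigenvalue of the (symmetric, for `C²` functions)
Hessian of `f` at `w`, expressed as the extremum of the Rayleigh quotient, i.e. the
supremum of `uᵀ∇²f(w)u` over Euclidean-unit vectors `u`. -/
def hessLambdaMax {m : ℕ} (f : (Fin m → ℝ) → ℝ) (w : Fin m → ℝ) : ℝ :=
  ⨆ v : {v : Fin m → ℝ // euclNorm v = 1}, iteratedFDeriv ℝ 2 f w ![v.1, v.1]

lemma euclNorm_nonneg {m : ℕ} (u : Fin m → ℝ) : 0 ≤ euclNorm u := Real.sqrt_nonneg _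

lemma euclNorm_sq {m : ℕ} (u : Fin m → ℝ) : euclNorm u ^ 2 = ∑ i, (u i) ^ 2 := by
  rw [euclNorm, Real.sq_sqrt]; positivity

lemma euclNorm_smul {m : ℕ} (t : ℝ) (u : Fin m → ℝ) :
    euclNorm (t • u) = |t| * euclNorm u := by
  rw [euclNorm, euclNorm]
  have : ∑ i, ((t • u) i) ^ 2 = t ^ 2 * ∑ i, (u i) ^ 2 := by
    rw [Finset.mul_sum]; congr 1; ext i; simp [mul_pow]
  rw [this, Real.sqrt_mul (sq_nonneg t), Real.sqrt_sq_eq_abs]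

lemma abs_le_euclNorm {m : ℕ} (u : Fin m → ℝ) (i : Fin m) : |u i| ≤ euclNorm u := by
  rw [euclNorm, ← Real.sqrt_sq_eq_abs]
  exact Real.sqrt_le_sqrt (Finset.single_le_sum (fun j _ => sq_nonneg (u j)) (Finset.mem_univ i))

lemma pinorm_le_euclNorm {m : ℕ} (u : Fin m → ℝ) : ‖u‖ ≤ euclNorm u := by
  rcases Nat.eq_zero_or_pos m with hm | hm
  · subst hm; simp [euclNorm]
    have : u = 0 := funext fun i => absurd i.2 (by omega)
    simp [this]
  · apply pi_norm_le_iff_of_nonneg (euclNorm_nonneg u) |>.2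
    intro i; rw [Real.norm_eq_abs]; exact abs_le_euclNorm u i

lemma euclNorm_pos {m : ℕ} {u : Fin m → ℝ} (hu : u ≠ 0) : 0 < euclNorm u := by
  rcases (euclNorm_nonneg u).lt_or_eq with h | h
  · exact h
  · exfalso; apply hu
    have h2 : ∑ i, (u i)^2 = 0 := by rw [← euclNorm_sq, ← h]; ring
    have := (Finset.sum_eq_zero_iff_of_nonneg (fun i _ => sq_nonneg (u i))).1 h2
    funext i
    simpa [pow_eq_zero_iff] using this i (Finset.mem_univ i)

lemma quad_le_lambdaMax {m : ℕ} (f : (Fin m → ℝ) → ℝ) (w : Fin m → ℝ) (u : Fin m → ℝ) :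
    iteratedFDeriv ℝ 2 f w ![u, u] ≤ hessLambdaMax f w * euclNorm u ^ 2 := by
  set B := iteratedFDeriv ℝ 2 f w with hB
  have hbdd : BddAbove (Set.range fun v : {v : Fin m → ℝ // euclNorm v = 1} => B ![v.1, v.1]) := by
    refine ⟨‖B‖, ?_⟩
    rintro x ⟨⟨v, hv⟩, rfl⟩
    calc B ![v, v] ≤ ‖B ![v, v]‖ := le_abs_self _
    _ ≤ ‖B‖ * ∏ i, ‖(![v, v] : Fin 2 → (Fin m → ℝ)) i‖ := B.le_opNorm _
    _ ≤ ‖B‖ * 1 := by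
        have heq : ∏ i, ‖(![v, v] : Fin 2 → (Fin m → ℝ)) i‖ = ‖v‖ * ‖v‖ := by
          simp [Fin.prod_univ_two]
        rw [heq]
        have hv1 : ‖v‖ ≤ 1 := by simpa [hv] using pinorm_le_euclNorm v
        have : ‖v‖ * ‖v‖ ≤ 1 := by nlinarith [norm_nonneg v]
        exact mul_le_mul_of_nonneg_left this (norm_nonneg _)
    _ = ‖B‖ := mul_one _
  by_cases hu : u = 0
  · subst hu
    have : B ![(0 : Fin m → ℝ), 0] = 0 := by
      have := B.map_coord_zero (m := ![(0 : Fin m → ℝ), 0]) 0 (by simp)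
      simpa using this
    simp [this, euclNorm_sq]
  · have hpos := euclNorm_pos hu
    set c := euclNorm u with hc
    set v := c⁻¹ • u with hv
    have hv1 : euclNorm v = 1 := by
      rw [hv, euclNorm_smul, abs_inv, abs_of_pos hpos, inv_mul_cancel₀ hpos.ne']
    have hexp : B ![u, u] = (c * c) * B ![v, v] := by
      have h1 : (fun i => (fun _ : Fin 2 => c) i • (![v, v] : Fin 2 → (Fin m → ℝ)) i) = ![u, u] := by
        funext i
        fin_cases i <;> simp [hv, smul_smul, mul_inv_cancel₀ hpos.ne']
      have := B.map_smul_univ (fun _ : Fin 2 => c) ![v, v]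
      rw [h1] at this
      rw [this]
      simp only [Fin.prod_univ_two, smul_eq_mul]
    rw [hexp]
    have hle : B ![v, v] ≤ hessLambdaMax f w := le_ciSup hbdd ⟨v, hv1⟩
    have : c * c = euclNorm u ^ 2 := by rw [hc]; ring
    rw [this]
    calc euclNorm u ^2 * B ![v,v] ≤ euclNorm u ^2 * hessLambdaMax f w := by
          apply mul_le_mul_of_nonneg_left hle (by positivity)
    _ = hessLambdaMax f w * euclNorm u ^ 2 := by ring

section TaylorSection
open Set
lemma taylor_bound {m : ℕ} (f : (Fin m → ℝ) → ℝ) (w u : Fin m → ℝ) {γ ε ρ : ℝ}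
    (hγ : 0 < γ) (hε : 0 < ε) (hρ : 0 ≤ ρ)
    (hC2 : ContDiffOn ℝ 2 f (Neigh γ ε w))
    (hLip : ∀ w₁ ∈ Neigh γ ε w, ∀ w₂ ∈ Neigh γ ε w, ∀ a b : Fin m → ℝ,
      |iteratedFDeriv ℝ 2 f w₁ ![a, b] - iteratedFDeriv ℝ 2 f w₂ ![a, b]|
        ≤ ρ * euclNorm (w₁ - w₂) * euclNorm a * euclNorm b)
    (hcrit : fderiv ℝ f w = 0)
    (hu : ∀ i, |u i| ≤ kappa γ ε (w i)) :
    f (w + u) ≤ f w + (1/2) * iteratedFDeriv ℝ 2 f w ![u, u] + (ρ/6) * euclNorm u ^ 3 := by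
  have hκ : ∀ i, 0 < kappa γ ε (w i) := fun i => by
    have : 0 ≤ γ * |w i| := mul_nonneg hγ.le (abs_nonneg _)
    unfold kappa; linarith
  set N := Neigh γ ε w with hN
  set O : Set (Fin m → ℝ) := Set.pi Set.univ (fun i => Metric.ball (w i) (kappa γ ε (w i)))
    with hO
  have hOopen : IsOpen O := isOpen_set_pi Set.finite_univ (fun i _ => Metric.isOpen_ball)
  have hmemO : ∀ v, (∀ i, |v i - w i| < kappa γ ε (w i)) → v ∈ O := by
    intro v hv
    intro i _
    rw [Metric.mem_ball, Real.dist_eq]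
    exact hv i
  have hON : O ⊆ N := by
    intro v hv i
    have := hv i (Set.mem_univ i)
    rw [Metric.mem_ball, Real.dist_eq] at this
    exact this.le
  set c : ℝ → (Fin m → ℝ) := fun t => w + t • u with hcdef
  have hcO : ∀ t : ℝ, |t| < 1 → c t ∈ O := by
    intro t ht
    apply hmemO
    intro i
    have h1 : |(c t) i - w i| = |t| * |u i| := by
      simp [hcdef, abs_mul]
    rw [h1]
    calc |t| * |u i| ≤ |t| * kappa γ ε (w i) :=
          mul_le_mul_of_nonneg_left (hu i) (abs_nonneg t)
    _ < 1 * kappa γ ε (w i) := by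
          apply mul_lt_mul_of_pos_right ht (hκ i)
    _ = kappa γ ε (w i) := one_mul _
  have hcN : ∀ t ∈ Icc (0:ℝ) 1, c t ∈ N := by
    intro t ht i
    have h1 : |(c t) i - w i| = |t| * |u i| := by simp [hcdef, abs_mul]
    rw [h1]
    calc |t| * |u i| ≤ 1 * kappa γ ε (w i) := by
          apply mul_le_mul (by rw [abs_of_nonneg ht.1]; exact ht.2) (hu i) (abs_nonneg _)
            zero_le_one
    _ = _ := one_mul _
  have hccont : Continuous c := by
    apply continuous_const.add (continuous_id.smul continuous_const)
  have hcderiv : ∀ t : ℝ, HasDerivAt c u t := by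
    intro t
    have h := ((hasDerivAt_id t).smul_const u).const_add w
    have h2 : HasDerivAt c ((1:ℝ) • u) t := h
    rw [one_smul] at h2
    exact h2
  have hCAt : ∀ t : ℝ, |t| < 1 → ContDiffAt ℝ 2 f (c t) := by
    intro t ht
    exact (hC2.mono hON).contDiffAt (hOopen.mem_nhds (hcO t ht))
  set g : ℝ → ℝ := fun t => f (c t) with hgdef
  set g1 : ℝ → ℝ := fun t => fderiv ℝ f (c t) u with hg1def
  set g2 : ℝ → ℝ := fun t => iteratedFDeriv ℝ 2 f (c t) ![u, u] with hg2def
  have hc0 : c 0 = w := by simp [hcdef]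
  have hg10 : g1 0 = 0 := by simp [hg1def, hc0, hcrit]
  have hg20 : g2 0 = iteratedFDeriv ℝ 2 f w ![u, u] := by rw [hg2def]; simp [hc0]
  set Q : ℝ := iteratedFDeriv ℝ 2 f w ![u, u] with hQ
  set K : ℝ := euclNorm u ^ 3 with hK
  have hKnn : 0 ≤ K := pow_nonneg (euclNorm_nonneg u) 3
  -- derivatives
  have hgderiv : ∀ t : ℝ, |t| < 1 → HasDerivAt g (g1 t) t := by
    intro t ht
    exact (((hCAt t ht).differentiableAt (by norm_num)).hasFDerivAt).comp_hasDerivAt t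
      (hcderiv t)
  have hg1deriv : ∀ t : ℝ, |t| < 1 → HasDerivAt g1 (g2 t) t := by
    intro t ht
    have hf' : ContDiffAt ℝ 1 (fderiv ℝ f) (c t) := (hCAt t ht).fderiv_right le_rfl
    have hd : HasFDerivAt (fderiv ℝ f) (fderiv ℝ (fderiv ℝ f) (c t)) (c t) :=
      (hf'.differentiableAt one_ne_zero).hasFDerivAt
    have h1 : HasDerivAt (fun s => fderiv ℝ f (c s)) (fderiv ℝ (fderiv ℝ f) (c t) u) t :=
      hd.comp_hasDerivAt t (hcderiv t)
    have h2 := ((ContinuousLinearMap.apply ℝ ℝ u).hasFDerivAt).comp_hasDerivAt t h1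
    have h3 : iteratedFDeriv ℝ 2 f (c t) ![u, u] = fderiv ℝ (fderiv ℝ f) (c t) u u := by
      rw [iteratedFDeriv_two_apply]
      simp
    show HasDerivAt (fun t => fderiv ℝ f (c t) u) (iteratedFDeriv ℝ 2 f (c t) ![u, u]) t
    rw [h3]
    exact h2
  -- Lipschitz bound on g2
  have hg2bound : ∀ t : ℝ, 0 ≤ t → t < 1 → g2 t ≤ Q + ρ * K * t := by
    intro t ht0 ht1
    have habs : |t| < 1 := by rw [abs_of_nonneg ht0]; exact ht1
    have hw : w ∈ N := fun i => by
      simpa using (hκ i).le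
    have h := hLip (c t) (hON (hcO t habs)) w hw u u
    have hsub : c t - w = t • u := by
      simp [hcdef]
    rw [hsub, euclNorm_smul, abs_of_nonneg ht0] at h
    have h2 : g2 t - Q ≤ ρ * (t * euclNorm u) * euclNorm u * euclNorm u := by
      have := (abs_le.1 h).2
      simpa [hg2def, hQ, hc0] using this
    have h3 : ρ * (t * euclNorm u) * euclNorm u * euclNorm u = ρ * K * t := by
      rw [hK]; ring
    linarith [h2, h3.le]
  -- continuity of g1 and g2 on [0,T] for T < 1
  have hg1cont : ∀ T : ℝ, 0 ≤ T → T < 1 → ContinuousOn g1 (Icc 0 T) := by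
    intro T hT0 hT1
    intro t ht
    exact ((hg1deriv t (by rw [abs_of_nonneg ht.1]; exact lt_of_le_of_lt ht.2 hT1)
      ).continuousAt).continuousWithinAt
  have hg2cont : ∀ T : ℝ, 0 ≤ T → T < 1 → ContinuousOn g2 (Icc 0 T) := by
    intro T hT0 hT1
    have hIcont : ContinuousOn (iteratedFDeriv ℝ 2 f) O := by
      have h1 : ContDiffOn ℝ 2 f O := hC2.mono hON
      have h2 := h1.continuousOn_iteratedFDerivWithin (m := 2) le_rfl hOopen.uniqueDiffOn
      exact h2.congr fun x hx => (iteratedFDerivWithin_of_isOpen 2 hOopen hx).symm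
    have hmap : MapsTo c (Icc 0 T) O := fun t ht =>
      hcO t (by rw [abs_of_nonneg ht.1]; exact lt_of_le_of_lt ht.2 hT1)
    have h3 : ContinuousOn (fun t => iteratedFDeriv ℝ 2 f (c t)) (Icc 0 T) :=
      hIcont.comp hccont.continuousOn hmap
    exact (continuous_eval_const (![u, u])).comp_continuousOn h3
  -- main estimate for T < 1
  have hmain : ∀ T : ℝ, 0 ≤ T → T < 1 →
      g T ≤ g 0 + Q * T ^ 2 / 2 + ρ * K * T ^ 3 / 6 := by
    intro T hT0 hT1
    have habslt : ∀ t ∈ Icc (0:ℝ) T, |t| < 1 := fun t ht => by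
      rw [abs_of_nonneg ht.1]; exact lt_of_le_of_lt ht.2 hT1
    -- bound on g1
    have hg1bound : ∀ t ∈ Icc (0:ℝ) T, g1 t ≤ Q * t + ρ * K * t ^ 2 / 2 := by
      intro t ht
      have hftc : ∫ r in (0:ℝ)..t, g2 r = g1 t - g1 0 := by
        apply intervalIntegral.integral_eq_sub_of_hasDerivAt
        · intro r hr
          rw [Set.uIcc_of_le ht.1] at hr
          exact hg1deriv r (habslt r ⟨hr.1, le_trans hr.2 ht.2⟩)
        · apply (hg2cont T hT0 hT1).mono (Icc_subset_Icc le_rfl ht.2) |>.intervalIntegrable_of_Icc ht.1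
      have hmono : ∫ r in (0:ℝ)..t, g2 r ≤ ∫ r in (0:ℝ)..t, (Q + ρ * K * r) := by
        apply intervalIntegral.integral_mono_on ht.1
        · exact ((hg2cont T hT0 hT1).mono (Icc_subset_Icc le_rfl ht.2)).intervalIntegrable_of_Icc ht.1
        · apply ContinuousOn.intervalIntegrable_of_Icc ht.1
          exact (continuousOn_const.add (continuousOn_const.mul continuousOn_id))
        · intro r hr
          exact hg2bound r hr.1 (lt_of_le_of_lt (le_trans hr.2 ht.2) hT1)
      have hcomp : ∫ r in (0:ℝ)..t, (Q + ρ * K * r) = Q * t + ρ * K * t ^ 2 / 2 := by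
        rw [intervalIntegral.integral_add intervalIntegrable_const
          (intervalIntegral.intervalIntegrable_id.const_mul _)]
        rw [intervalIntegral.integral_const, intervalIntegral.integral_const_mul,
          integral_id]
        simp; ring
      have := hftc ▸ hmono
      rw [hcomp] at this
      linarith [hg10, this]
    -- integrate bound on g1
    have hftc2 : ∫ r in (0:ℝ)..T, g1 r = g T - g 0 := by
      apply intervalIntegral.integral_eq_sub_of_hasDerivAt
      · intro r hr
        rw [Set.uIcc_of_le hT0] at hr
        exact hgderiv r (habslt r hr)
      · exact (hg1cont T hT0 hT1).intervalIntegrable_of_Icc hT0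
    have hmono2 : ∫ r in (0:ℝ)..T, g1 r ≤ ∫ r in (0:ℝ)..T, (Q * r + ρ * K * r ^ 2 / 2) := by
      apply intervalIntegral.integral_mono_on hT0
      · exact (hg1cont T hT0 hT1).intervalIntegrable_of_Icc hT0
      · apply ContinuousOn.intervalIntegrable_of_Icc hT0
        fun_prop
      · exact hg1bound
    have hcomp2 : ∫ r in (0:ℝ)..T, (Q * r + ρ * K * r ^ 2 / 2)
        = Q * T ^ 2 / 2 + ρ * K * T ^ 3 / 6 := by
      rw [intervalIntegral.integral_add (intervalIntegral.intervalIntegrable_id.const_mul _)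
        ((intervalIntegral.intervalIntegrable_pow 2).const_mul _ |>.div_const _)]
      rw [intervalIntegral.integral_const_mul, intervalIntegral.integral_div,
        intervalIntegral.integral_const_mul, integral_id, integral_pow]
      ring
    rw [hftc2] at hmono2
    rw [hcomp2] at hmono2
    linarith
  -- pass to the limit T → 1⁻
  have hgcont1 : ContinuousWithinAt g (Ico 0 1) 1 := by
    have hgc : ContinuousOn g (Icc 0 1) :=
      (hC2.continuousOn).comp hccont.continuousOn (fun t ht => hcN t ht)
    exact (hgc 1 (by simp)).mono Ico_subset_Icc_self
  have hne : (nhdsWithin (1:ℝ) (Ico (0:ℝ) 1)).NeBot := by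
    apply mem_closure_iff_nhdsWithin_neBot.1
    rw [closure_Ico (by norm_num : (0:ℝ) ≠ 1)]
    exact ⟨zero_le_one, le_rfl⟩
  have hlim1 : Filter.Tendsto g (nhdsWithin (1:ℝ) (Ico (0:ℝ) 1)) (nhds (g 1)) := hgcont1
  have hlim2 : Filter.Tendsto (fun T => g 0 + Q * T ^ 2 / 2 + ρ * K * T ^ 3 / 6)
      (nhdsWithin (1:ℝ) (Ico (0:ℝ) 1))
      (nhds (g 0 + Q * 1 ^ 2 / 2 + ρ * K * 1 ^ 3 / 6)) := by
    apply Filter.Tendsto.mono_left _ nhdsWithin_le_nhds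
    exact ((by fun_prop : Continuous fun T : ℝ => g 0 + Q * T ^ 2 / 2 + ρ * K * T ^ 3 / 6).tendsto 1)
  have hfin : g 1 ≤ g 0 + Q * 1 ^ 2 / 2 + ρ * K * 1 ^ 3 / 6 := by
    apply le_of_tendsto_of_tendsto hlim1 hlim2
    filter_upwards [self_mem_nhdsWithin] with T hT
    exact hmain T hT.1 hT.2
  have hgw : g 1 = f (w + u) := by simp [hgdef, hcdef]
  have hg0 : g 0 = f w := by show f (c 0) = f w; rw [hc0]
  rw [hgw, hg0] at hfin
  calc f (w + u) ≤ f w + Q * 1 ^ 2 / 2 + ρ * K * 1 ^ 3 / 6 := hfin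
  _ = f w + (1/2) * Q + (ρ/6) * K := by ring
  _ = _ := by rw [hQ, hK]

end TaylorSection

section PBSection
open Real
-- P1: Gibbs' inequality
lemma integral_llr_nonneg' {α : Type*} [MeasurableSpace α] (μ ν : Measure α)
    [IsProbabilityMeasure μ] [IsProbabilityMeasure ν]
    (h : μ ≪ ν) (hint : Integrable (llr μ ν) μ) : 0 ≤ ∫ x, llr μ ν x ∂μ := by
  have hexp_eq : (fun x => exp (- llr μ ν x)) =ᵐ[μ] fun x => (ν.rnDeriv μ x).toReal :=
    exp_neg_llr h
  have hexp_int : Integrable (fun x => exp (- llr μ ν x)) μ :=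
    (Measure.integrable_toReal_rnDeriv (μ := ν) (ν := μ)).congr hexp_eq.symm
  have hjensen : exp (∫ x, - llr μ ν x ∂μ) ≤ ∫ x, exp (- llr μ ν x) ∂μ := by
    have h1 := convexOn_exp.map_average_le continuous_exp.continuousOn isClosed_univ
      (by simp : ∀ᵐ x ∂μ, - llr μ ν x ∈ Set.univ) hint.neg hexp_int
    simpa [average_eq_integral] using h1
  have hle1 : ∫ x, exp (- llr μ ν x) ∂μ ≤ 1 := by
    rw [integral_congr_ae hexp_eq]
    have h2 := Measure.setIntegral_toReal_rnDeriv_le (μ := ν) (ν := μ) (s := Set.univ)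
      (measure_ne_top ν _)
    simpa using h2
  have h3 : exp (∫ x, - llr μ ν x ∂μ) ≤ 1 := hjensen.trans hle1
  have h4 := Real.exp_le_one_iff.1 h3
  rw [integral_neg] at h4
  linarith

-- P2: Donsker-Varadhan style bound
lemma dv_bound {α : Type*} [MeasurableSpace α] (ν prior : Measure α)
    [IsProbabilityMeasure ν] [IsProbabilityMeasure prior]
    (f : α → ℝ) (hf : Measurable f) (C : ℝ) (hbound : ∀ x, |f x| ≤ C)
    (hac : ν ≪ prior) (hint : Integrable (llr ν prior) ν) :
    ∫ x, f x ∂ν ≤ ∫ x, llr ν prior x ∂ν + Real.log (∫ x, exp (f x) ∂prior) := by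
  have hfν : Integrable f ν :=
    Integrable.mono' (integrable_const C) hf.aestronglyMeasurable
      (Filter.Eventually.of_forall fun x => by simpa using hbound x)
  have hexpprior : Integrable (fun x => exp (f x)) prior := by
    refine Integrable.mono' (integrable_const (exp C)) (hf.exp).aestronglyMeasurable
      (Filter.Eventually.of_forall fun x => ?_)
    rw [Real.norm_eq_abs, abs_of_pos (exp_pos _)]
    exact exp_le_exp.2 ((abs_le.1 (hbound x)).2)
  haveI : NeZero prior := ⟨IsProbabilityMeasure.ne_zero prior⟩
  haveI hprior' : IsProbabilityMeasure (prior.tilted f) := isProbabilityMeasure_tilted hexpprior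
  have hνprior' : ν ≪ prior.tilted f := hac.trans (absolutelyContinuous_tilted hexpprior)
  have heq := integral_llr_tilted_right hac hfν hexpprior hint
  have hint' : Integrable (llr ν (prior.tilted f)) ν :=
    integrable_llr_tilted_right hac hfν hint hexpprior
  have hnn := integral_llr_nonneg' ν (prior.tilted f) hνprior' hint'
  rw [heq] at hnn
  linarith

-- P3: Hoeffding-lite
lemma mgf_bound {S : Type*} [MeasurableSpace S] (𝒟 : Measure S) [IsProbabilityMeasure 𝒟]
    (X : S → ℝ) (hX : Measurable X) (h01 : ∀ x, X x ∈ Set.Icc (0:ℝ) 1) (t : ℝ) :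
    ∫ x, exp (t * ((∫ y, X y ∂𝒟) - X x)) ∂𝒟 ≤ exp (t ^ 2 / 2) := by
  set M : ℝ := ∫ y, X y ∂𝒟 with hM
  have hXint : Integrable X 𝒟 :=
    Integrable.mono' (integrable_const 1) hX.aestronglyMeasurable
      (Filter.Eventually.of_forall fun x => by
        rw [Real.norm_eq_abs, abs_of_nonneg (h01 x).1]; exact (h01 x).2)
  have hM01 : M ∈ Set.Icc (0:ℝ) 1 := by
    constructor
    · exact integral_nonneg fun x => (h01 x).1
    · calc M ≤ ∫ _, (1:ℝ) ∂𝒟 := integral_mono hXint (integrable_const 1) fun x => (h01 x).2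
      _ = 1 := by simp
  have hY : ∀ x, |M - X x| ≤ 1 := by
    intro x
    rw [abs_le]
    constructor <;> [nlinarith [(h01 x).2, hM01.1]; nlinarith [(h01 x).1, hM01.2]]
  -- pointwise bound
  have hpt : ∀ x, exp (t * (M - X x))
      ≤ (1 + (M - X x)) / 2 * exp t + (1 - (M - X x)) / 2 * exp (-t) := by
    intro x
    set Y := M - X x with hYdef
    have hY1 : |Y| ≤ 1 := hY x
    have ha : 0 ≤ (1 + Y) / 2 := by have := (abs_le.1 hY1).1; linarith
    have hb : 0 ≤ (1 - Y) / 2 := by have := (abs_le.1 hY1).2; linarith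
    have hab : (1 + Y) / 2 + (1 - Y) / 2 = 1 := by ring
    have h := convexOn_exp.2 (Set.mem_univ t) (Set.mem_univ (-t)) ha hb hab
    have harg : (1 + Y) / 2 * t + (1 - Y) / 2 * (-t) = t * Y := by ring
    simp only [smul_eq_mul] at h
    rw [harg] at h
    exact h
  have hint_lhs : Integrable (fun x => exp (t * (M - X x))) 𝒟 := by
    refine Integrable.mono' (integrable_const (exp |t|))
      ((measurable_const.sub hX).const_mul t).exp.aestronglyMeasurable
      (Filter.Eventually.of_forall fun x => ?_)
    rw [Real.norm_eq_abs, abs_of_pos (exp_pos _)]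
    apply exp_le_exp.2
    calc t * (M - X x) ≤ |t * (M - X x)| := le_abs_self _
    _ = |t| * |M - X x| := abs_mul _ _
    _ ≤ |t| * 1 := mul_le_mul_of_nonneg_left (hY x) (abs_nonneg t)
    _ = |t| := mul_one _
  have hiY : Integrable (fun x => M - X x) 𝒟 := (integrable_const M).sub hXint
  have hi1 : Integrable (fun x => (1 + (M - X x)) / 2 * exp t) 𝒟 := by
    exact (((integrable_const 1).add hiY).div_const 2).mul_const _
  have hi2 : Integrable (fun x => (1 - (M - X x)) / 2 * exp (-t)) 𝒟 := by
    exact (((integrable_const 1).sub hiY).div_const 2).mul_const _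
  have hint_rhs : Integrable
      (fun x => (1 + (M - X x)) / 2 * exp t + (1 - (M - X x)) / 2 * exp (-t)) 𝒟 :=
    hi1.add hi2
  have hstep : ∫ x, exp (t * (M - X x)) ∂𝒟
      ≤ ∫ x, ((1 + (M - X x)) / 2 * exp t + (1 - (M - X x)) / 2 * exp (-t)) ∂𝒟 :=
    integral_mono hint_lhs hint_rhs hpt
  have hYmean : ∫ x, (M - X x) ∂𝒟 = 0 := by
    rw [integral_sub (integrable_const M) hXint]
    simp [hM]
  have hcalc : ∫ x, ((1 + (M - X x)) / 2 * exp t + (1 - (M - X x)) / 2 * exp (-t)) ∂𝒟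
      = (exp t + exp (-t)) / 2 := by
    rw [integral_add hi1 hi2]
    rw [integral_mul_const, integral_mul_const, integral_div, integral_div]
    have h1 : ∫ x, (1 + (M - X x)) ∂𝒟 = 1 := by
      rw [integral_add (integrable_const 1) hiY]
      simp [hYmean]
    have h2 : ∫ x, (1 - (M - X x)) ∂𝒟 = 1 := by
      rw [integral_sub (integrable_const 1) hiY]
      simp [hYmean]
    rw [h1, h2]
    ring
  have hcosh : (exp t + exp (-t)) / 2 ≤ exp (t ^ 2 / 2) := by
    have := Real.cosh_le_exp_half_sq t
    rwa [Real.cosh_eq] at this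
  calc ∫ x, exp (t * (M - X x)) ∂𝒟 ≤ (exp t + exp (-t)) / 2 := by rw [← hcalc]; exact hstep
  _ ≤ exp (t ^ 2 / 2) := hcosh

end PBSection

section meas
variable {S : Type*} [MeasurableSpace S] {m n : ℕ} {ℓ : (Fin m → ℝ) → S → ℝ}
  {𝒟 : Measure S}

lemma measurable_ell_left (hℓmeas : Measurable (Function.uncurry ℓ)) (x : S) :
    Measurable (fun w => ℓ w x) :=
  hℓmeas.comp (measurable_id.prodMk measurable_const)

lemma measurable_ell_right (hℓmeas : Measurable (Function.uncurry ℓ)) (w : Fin m → ℝ) :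
    Measurable (ℓ w) :=
  hℓmeas.comp (measurable_const.prodMk measurable_id)

lemma measurable_empLoss (hℓmeas : Measurable (Function.uncurry ℓ)) (s : Fin n → S) :
    Measurable (empLoss ℓ s) := by
  apply Measurable.const_mul
  apply Finset.measurable_sum
  intro i _
  exact measurable_ell_left hℓmeas (s i)

lemma measurable_empLoss₂ (hℓmeas : Measurable (Function.uncurry ℓ)) :
    Measurable (fun p : (Fin n → S) × (Fin m → ℝ) => empLoss ℓ p.1 p.2) := by
  apply Measurable.const_mul
  apply Finset.measurable_sum
  intro i _
  exact hℓmeas.comp ((measurable_snd).prodMk ((measurable_pi_apply i).comp measurable_fst))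

lemma stronglyMeasurable_expLoss [SFinite 𝒟] (hℓmeas : Measurable (Function.uncurry ℓ)) :
    StronglyMeasurable (expLoss ℓ 𝒟) :=
  hℓmeas.stronglyMeasurable.integral_prod_right'

lemma empLoss_mem (hℓ01 : ∀ w x, ℓ w x ∈ Set.Icc (0:ℝ) 1) (hn : 0 < n) (s : Fin n → S)
    (w : Fin m → ℝ) : empLoss ℓ s w ∈ Set.Icc (0:ℝ) 1 := by
  have hnpos : (0:ℝ) < n := Nat.cast_pos.2 hn
  constructor
  · apply mul_nonneg (by positivity)
    exact Finset.sum_nonneg fun i _ => (hℓ01 w (s i)).1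
  · rw [empLoss]
    have : ∑ i, ℓ w (s i) ≤ (n:ℝ) := by
      calc ∑ i, ℓ w (s i) ≤ ∑ _i : Fin n, (1:ℝ) :=
            Finset.sum_le_sum fun i _ => (hℓ01 w (s i)).2
      _ = n := by simp
    calc (n : ℝ)⁻¹ * ∑ i, ℓ w (s i) ≤ (n:ℝ)⁻¹ * n :=
          mul_le_mul_of_nonneg_left this (by positivity)
    _ = 1 := inv_mul_cancel₀ hnpos.ne'

lemma expLoss_mem [IsProbabilityMeasure 𝒟] (hℓmeas : Measurable (Function.uncurry ℓ))
    (hℓ01 : ∀ w x, ℓ w x ∈ Set.Icc (0:ℝ) 1) (w : Fin m → ℝ) :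
    expLoss ℓ 𝒟 w ∈ Set.Icc (0:ℝ) 1 := by
  constructor
  · exact integral_nonneg fun x => (hℓ01 w x).1
  · have hint : Integrable (ℓ w) 𝒟 := by
      refine Integrable.mono' (integrable_const 1)
        (measurable_ell_right hℓmeas w).aestronglyMeasurable
        (Filter.Eventually.of_forall fun x => ?_)
      rw [Real.norm_eq_abs, abs_of_nonneg (hℓ01 w x).1]; exact (hℓ01 w x).2
    calc expLoss ℓ 𝒟 w ≤ ∫ _, (1:ℝ) ∂𝒟 :=
          integral_mono hint (integrable_const 1) fun x => (hℓ01 w x).2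
    _ = 1 := by simp

end meas

-- The good event
lemma event_exists (m n : ℕ) (hn : 0 < n)
    {S : Type*} [MeasurableSpace S] (𝒟 : Measure S) [IsProbabilityMeasure 𝒟]
    (ℓ : (Fin m → ℝ) → S → ℝ)
    (hℓmeas : Measurable (Function.uncurry ℓ))
    (hℓ01 : ∀ w x, ℓ w x ∈ Set.Icc (0 : ℝ) 1)
    (π : Measure (Fin m → ℝ)) [IsProbabilityMeasure π]
    (δ η : ℝ) (hδ : 0 < δ) (hη : 0 < η) :
    ∃ A : Set (Fin n → S), MeasurableSet A ∧
      ENNReal.ofReal (1 - δ) ≤ (Measure.pi fun _ : Fin n => 𝒟) A ∧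
      ∀ s ∈ A, ∫ w', Real.exp (η * (expLoss ℓ 𝒟 w' - empLoss ℓ s w')) ∂π
          ≤ Real.exp (η ^ 2 / (2 * n)) / δ := by
  have hnpos : (0:ℝ) < n := Nat.cast_pos.2 hn
  set P : Measure (Fin n → S) := Measure.pi fun _ : Fin n => 𝒟 with hP
  haveI : IsProbabilityMeasure P := by rw [hP]; infer_instance
  set f : (Fin n → S) → (Fin m → ℝ) → ℝ :=
    fun s w' => Real.exp (η * (expLoss ℓ 𝒟 w' - empLoss ℓ s w')) with hf
  have hGmeas : Measurable (Function.uncurry f) := by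
    apply Measurable.exp
    apply Measurable.const_mul
    exact ((stronglyMeasurable_expLoss (𝒟 := 𝒟) hℓmeas).measurable.comp measurable_snd).sub
      (measurable_empLoss₂ hℓmeas)
  have hGbound : ∀ p : (Fin n → S) × (Fin m → ℝ), ‖Function.uncurry f p‖ ≤ Real.exp η := by
    rintro ⟨s, w'⟩
    rw [Function.uncurry, Real.norm_eq_abs, abs_of_pos (Real.exp_pos _)]
    apply Real.exp_le_exp.2
    have h1 := (expLoss_mem (𝒟 := 𝒟) hℓmeas hℓ01 w').2
    have h2 := (empLoss_mem hℓ01 hn s w').1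
    calc η * (expLoss ℓ 𝒟 w' - empLoss ℓ s w') ≤ η * 1 :=
          mul_le_mul_of_nonneg_left (by linarith) hη.le
    _ = η := mul_one η
  have hGint : Integrable (Function.uncurry f) (P.prod π) :=
    Integrable.mono' (integrable_const (Real.exp η)) hGmeas.aestronglyMeasurable
      (Filter.Eventually.of_forall hGbound)
  set X : (Fin n → S) → ℝ := fun s => ∫ w', f s w' ∂π with hX
  have hXsm : StronglyMeasurable X := hGmeas.stronglyMeasurable.integral_prod_right'
  have hXint : Integrable X P := hGint.integral_prod_left
  have hXnonneg : ∀ s, 0 ≤ X s := fun s => integral_nonneg fun w' => (Real.exp_pos _).le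
  -- expectation bound
  have hEX : ∫ s, X s ∂P ≤ Real.exp (η ^ 2 / (2 * n)) := by
    have hswap : ∫ s, X s ∂P = ∫ w', ∫ s, f s w' ∂P ∂π := integral_integral_swap hGint
    have hinner : ∀ w', ∫ s, f s w' ∂P ≤ Real.exp (η ^ 2 / (2 * n)) := by
      intro w'
      set M : ℝ := expLoss ℓ 𝒟 w' with hM
      set h : S → ℝ := fun x => Real.exp ((η / n) * (M - ℓ w' x)) with hh
      have hXmeas : Measurable (ℓ w') := measurable_ell_right hℓmeas w'
      have hprod : ∀ s : Fin n → S, f s w' = ∏ i, h (s i) := by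
        intro s
        rw [hf]
        simp only
        rw [hh]
        rw [← Real.exp_sum]
        congr 1
        have h1 : ∑ i : Fin n, (η / n) * (M - ℓ w' (s i))
            = (η / n) * ((n : ℝ) * M - ∑ i, ℓ w' (s i)) := by
          rw [← Finset.mul_sum, Finset.sum_sub_distrib, Finset.sum_const, Finset.card_univ,
            Fintype.card_fin, nsmul_eq_mul]
        rw [h1, empLoss]
        field_simp
        ring
      have hprodint : ∫ s, f s w' ∂P = (∫ x, h x ∂𝒟) ^ n := by
        rw [integral_congr_ae (Filter.Eventually.of_forall hprod)]
        letI : MeasureSpace S := ⟨𝒟⟩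
        haveI : SigmaFinite (volume : Measure S) := (inferInstance : SigmaFinite 𝒟)
        have := MeasureTheory.integral_fintype_prod_eq_pow (𝕜 := ℝ) (ι := Fin n) h (μ := 𝒟)
        rw [Fintype.card_fin] at this
        exact this
      have hfac : ∫ x, h x ∂𝒟 ≤ Real.exp ((η / n) ^ 2 / 2) := by
        have := mgf_bound 𝒟 (ℓ w') hXmeas (hℓ01 w') (η / n)
        exact this
      have hfacpos : 0 ≤ ∫ x, h x ∂𝒟 := integral_nonneg fun x => (Real.exp_pos _).le
      calc ∫ s, f s w' ∂P = (∫ x, h x ∂𝒟) ^ n := hprodint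
      _ ≤ (Real.exp ((η / n) ^ 2 / 2)) ^ n := pow_le_pow_left₀ hfacpos hfac n
      _ = Real.exp ((n : ℝ) * ((η / n) ^ 2 / 2)) := by
          rw [← Real.exp_nat_mul]
      _ = Real.exp (η ^ 2 / (2 * n)) := by
          congr 1
          field_simp
    rw [hswap]
    calc ∫ w', ∫ s, f s w' ∂P ∂π ≤ ∫ _, Real.exp (η ^ 2 / (2 * n)) ∂π := by
          apply integral_mono _ (integrable_const _) hinner
          exact hGint.integral_prod_right
    _ = Real.exp (η ^ 2 / (2 * n)) := by simp
  -- Markov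
  set cst : ℝ := Real.exp (η ^ 2 / (2 * n)) / δ with hcst
  have hcstpos : 0 < cst := by positivity
  set A : Set (Fin n → S) := {s | X s ≤ cst} with hA
  have hAmeas : MeasurableSet A := by
    exact measurableSet_le hXsm.measurable measurable_const
  refine ⟨A, hAmeas, ?_, ?_⟩
  · -- measure bound
    have hmarkov := mul_meas_ge_le_integral_of_nonneg
      (Filter.Eventually.of_forall hXnonneg) hXint cst
    have hub : (P {s | cst ≤ X s}).toReal ≤ δ := by
      have h2 : cst * (P {s | cst ≤ X s}).toReal ≤ Real.exp (η ^ 2 / (2 * n)) :=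
        le_trans hmarkov hEX
      have h3 : (P {s | cst ≤ X s}).toReal ≤ Real.exp (η ^ 2 / (2 * n)) / cst :=
        (le_div_iff₀' hcstpos).2 h2
      have h4 : Real.exp (η ^ 2 / (2 * n)) / cst = δ := by
        rw [hcst]
        field_simp
      linarith
    have hmle : P {s | cst ≤ X s} ≤ ENNReal.ofReal δ :=
      (ENNReal.le_ofReal_iff_toReal_le (measure_ne_top _ _) hδ.le).2 hub
    have hcompl : Aᶜ ⊆ {s | cst ≤ X s} := by
      intro s hs
      simp only [hA, Set.mem_compl_iff, Set.mem_setOf_eq, not_le] at hs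
      exact le_of_lt hs
    have hAc : P Aᶜ ≤ ENNReal.ofReal δ := le_trans (measure_mono hcompl) hmle
    have hPA : P A = 1 - P Aᶜ := by
      calc P A = P Aᶜᶜ := by rw [compl_compl]
      _ = 1 - P Aᶜ := prob_compl_eq_one_sub hAmeas.compl
    rw [hPA]
    calc ENNReal.ofReal (1 - δ) = ENNReal.ofReal 1 - ENNReal.ofReal δ := by
          rw [ENNReal.ofReal_sub _ hδ.le]
    _ = 1 - ENNReal.ofReal δ := by rw [ENNReal.ofReal_one]
    _ ≤ 1 - P Aᶜ := by
          exact tsub_le_tsub_left hAc 1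
  · intro s hs
    exact hs

lemma continuous_euclNorm {m : ℕ} : Continuous (euclNorm (m := m)) := by
  apply Real.continuous_sqrt.comp
  exact continuous_finset_sum _ fun i _ => (continuous_apply i).pow 2

lemma euclNorm_mono {m : ℕ} {u v : Fin m → ℝ} (h : ∀ i, |u i| ≤ v i) :
    euclNorm u ≤ euclNorm v := by
  apply Real.sqrt_le_sqrt
  apply Finset.sum_le_sum
  intro i _
  calc (u i)^2 = |u i|^2 := (sq_abs _).symm
  _ ≤ (v i)^2 := by
      have h0 : (0:ℝ) ≤ |u i| := abs_nonneg _
      nlinarith [h i]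


/-- **Lemma 4**: with probability at least `1 − δ` over the draw of `n` i.i.d. samples,
simultaneously for every local optimum `w*` (`∇L̂(w*) = 0`) at which `L̂` is `ρ`-Hessian
Lipschitz on `Neigh_{γ,ε}(w*)`, and every random perturbation `u` (law `μ`, no
independence or zero-mean assumption) with `|uᵢ| ≤ κ_{γ,ε}(wᵢ*)` a.s.:
`E_u[L(w*+u)] ≤ L̂(w*) + (1/2)λ_max(∇²L̂(w*))∑ᵢE[uᵢ²] + (ρ/6)E[‖u‖³]
  + (KL(law(w*+u)‖π) + log(1/δ))/η + η/(2n)`. -/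
theorem lemma4_pacBayes_lambdaMax
    (m n : ℕ) (hn : 0 < n)
    {S : Type*} [MeasurableSpace S] (𝒟 : Measure S) [IsProbabilityMeasure 𝒟]
    (ℓ : (Fin m → ℝ) → S → ℝ)
    (hℓmeas : Measurable (Function.uncurry ℓ))
    (hℓ01 : ∀ w x, ℓ w x ∈ Set.Icc (0 : ℝ) 1)
    (π : Measure (Fin m → ℝ)) [IsProbabilityMeasure π]
    (δ η γ ε ρ : ℝ) (hδ : 0 < δ) (hη : 0 < η) (hγ : 0 < γ) (hε : 0 < ε) (hρ : 0 ≤ ρ) :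
    ENNReal.ofReal (1 - δ) ≤
      (Measure.pi fun _ : Fin n => 𝒟) {s : Fin n → S |
        ∀ w : Fin m → ℝ,
          fderiv ℝ (empLoss ℓ s) w = 0 →
          IsHessianLipschitzOn (empLoss ℓ s) ρ (Neigh γ ε w) →
          ∀ μ : Measure (Fin m → ℝ), IsProbabilityMeasure μ →
            (∀ᵐ u ∂μ, ∀ i, |u i| ≤ kappa γ ε (w i)) →
            ((∫ u, expLoss ℓ 𝒟 (w + u) ∂μ : ℝ) : EReal) ≤
              ((empLoss ℓ s w
                  + (1 / 2) * hessLambdaMax (empLoss ℓ s) w * ∑ i, ∫ u, (u i) ^ 2 ∂μ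
                  + (ρ / 6) * ∫ u, (euclNorm u) ^ 3 ∂μ : ℝ) : EReal)
                + (klDiv (μ.map (fun u => w + u)) π
                    + ((Real.log (1 / δ) : ℝ) : EReal)) / (η : EReal)
                + ((η / (2 * n) : ℝ) : EReal)} := by

  have hnpos : (0:ℝ) < n := Nat.cast_pos.2 hn
  obtain ⟨A, hAmeas, hAprob, hAprop⟩ := event_exists m n hn 𝒟 ℓ hℓmeas hℓ01 π δ η hδ hη
  refine le_trans hAprob (measure_mono ?_)
  intro s hsA
  intro w hcrit hhess μ hμprob hbox
  haveI := hμprob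
  set L : (Fin m → ℝ) → ℝ := expLoss ℓ 𝒟 with hL
  set Lh : (Fin m → ℝ) → ℝ := empLoss ℓ s with hLh
  have hLmeas : Measurable L := (stronglyMeasurable_expLoss (𝒟 := 𝒟) hℓmeas).measurable
  have hLhmeas : Measurable Lh := measurable_empLoss hℓmeas s
  have haddmeas : Measurable (fun u : Fin m → ℝ => w + u) := measurable_const.add measurable_id
  set ν : Measure (Fin m → ℝ) := μ.map (fun u => w + u) with hν
  haveI hνprob : IsProbabilityMeasure ν := Measure.isProbabilityMeasure_map haddmeas.aemeasurable
  -- integrability over μ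
  set R : ℝ := euclNorm (fun i => kappa γ ε (w i)) with hR
  have hbox2 : ∀ᵐ u ∂μ, euclNorm u ≤ R := by
    filter_upwards [hbox] with u hu
    exact euclNorm_mono hu
  have iLh : Integrable (fun u => Lh (w + u)) μ := by
    refine Integrable.mono' (integrable_const 1)
      ((hLhmeas.comp haddmeas).aestronglyMeasurable)
      (Filter.Eventually.of_forall fun u => ?_)
    have := empLoss_mem hℓ01 hn s (w + u)
    rw [Real.norm_eq_abs, abs_of_nonneg this.1]; exact this.2
  have iL : Integrable (fun u => L (w + u)) μ := by
    refine Integrable.mono' (integrable_const 1)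
      ((hLmeas.comp haddmeas).aestronglyMeasurable)
      (Filter.Eventually.of_forall fun u => ?_)
    have := expLoss_mem (𝒟 := 𝒟) hℓmeas hℓ01 (w + u)
    rw [Real.norm_eq_abs, abs_of_nonneg this.1]; exact this.2
  have isq : ∀ i, Integrable (fun u : Fin m → ℝ => (u i) ^ 2) μ := by
    intro i
    refine Integrable.mono' (integrable_const ((kappa γ ε (w i))^2))
      (((measurable_pi_apply i).pow_const 2).aestronglyMeasurable) ?_
    filter_upwards [hbox] with u hu
    rw [Real.norm_eq_abs, abs_of_nonneg (sq_nonneg _)]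
    calc (u i)^2 = |u i|^2 := (sq_abs _).symm
    _ ≤ (kappa γ ε (w i))^2 := by nlinarith [abs_nonneg (u i), hu i]
  have inorm3 : Integrable (fun u : Fin m → ℝ => euclNorm u ^ 3) μ := by
    refine Integrable.mono' (integrable_const (|R|^3))
      ((continuous_euclNorm.pow 3).measurable.aestronglyMeasurable) ?_
    filter_upwards [hbox2] with u hu
    rw [Real.norm_eq_abs, abs_of_nonneg (pow_nonneg (euclNorm_nonneg u) 3)]
    exact pow_le_pow_left₀ (euclNorm_nonneg u) (le_trans hu (le_abs_self R)) 3
  -- Taylor + Rayleigh pointwise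
  set lmax : ℝ := hessLambdaMax Lh w with hlm
  have htaylor : ∀ᵐ u ∂μ, Lh (w + u)
      ≤ Lh w + (1/2) * lmax * ∑ i, (u i)^2 + (ρ/6) * euclNorm u ^ 3 := by
    filter_upwards [hbox] with u hu
    have h1 := taylor_bound Lh w u hγ hε hρ hhess.1 hhess.2 hcrit hu
    have h2 := quad_le_lambdaMax Lh w u
    have h3 : (1/2) * iteratedFDeriv ℝ 2 Lh w ![u, u] ≤ (1/2) * (lmax * euclNorm u ^2) := by
      apply mul_le_mul_of_nonneg_left h2 (by norm_num)
    rw [euclNorm_sq] at h3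
    calc Lh (w + u) ≤ Lh w + (1/2) * iteratedFDeriv ℝ 2 Lh w ![u, u]
          + (ρ/6) * euclNorm u ^ 3 := h1
    _ ≤ Lh w + (1/2) * (lmax * ∑ i, (u i)^2) + (ρ/6) * euclNorm u ^ 3 := by linarith
    _ = Lh w + (1/2) * lmax * ∑ i, (u i)^2 + (ρ/6) * euclNorm u ^ 3 := by ring
  set B2 : ℝ := ∑ i, ∫ u, (u i)^2 ∂μ with hB2
  set B3 : ℝ := ∫ u, euclNorm u ^ 3 ∂μ with hB3
  set Abound : ℝ := Lh w + (1/2) * lmax * B2 + (ρ/6) * B3 with hAbound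
  have hsumint : Integrable (fun u : Fin m → ℝ => ∑ i, (u i)^2) μ :=
    integrable_finset_sum _ fun i _ => isq i
  have hLh_int : ∫ u, Lh (w + u) ∂μ ≤ Abound := by
    have hrhs_int : Integrable
        (fun u : Fin m → ℝ => Lh w + (1/2) * lmax * ∑ i, (u i)^2 + (ρ/6) * euclNorm u ^3) μ := by
      exact ((integrable_const _).add (hsumint.const_mul _)).add (inorm3.const_mul _)
    have hmono := integral_mono_ae iLh hrhs_int htaylor
    have e1 : ∫ u, (Lh w + (1/2) * lmax * ∑ i, (u i)^2 + (ρ/6) * euclNorm u ^3) ∂μ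
        = (∫ u, (Lh w + (1/2) * lmax * ∑ i, (u i)^2) ∂μ) + ∫ u, (ρ/6) * euclNorm u ^3 ∂μ :=
      integral_add ((integrable_const _).add (hsumint.const_mul _)) (inorm3.const_mul _)
    have e2 : ∫ u, (Lh w + (1/2) * lmax * ∑ i, (u i)^2) ∂μ
        = (∫ _u, Lh w ∂μ) + ∫ u, (1/2) * lmax * ∑ i, (u i)^2 ∂μ :=
      integral_add (integrable_const _) (hsumint.const_mul _)
    have e3 : ∫ _u : Fin m → ℝ, Lh w ∂μ = Lh w := by simp
    have e4 : ∫ u, (1/2) * lmax * ∑ i, (u i)^2 ∂μ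
        = (1/2) * lmax * ∫ u, ∑ i, (u i)^2 ∂μ := integral_const_mul _ _
    have e5 : ∫ u, (ρ/6) * euclNorm u ^3 ∂μ = (ρ/6) * B3 := integral_const_mul _ _
    have e6 : ∫ u, ∑ i, (u i)^2 ∂μ = B2 := integral_finset_sum _ fun i _ => isq i
    rw [e1, e2, e3, e4, e5, e6] at hmono
    exact hmono
  -- map integrals
  have hmapL : ∫ v, L v ∂ν = ∫ u, L (w + u) ∂μ := by
    rw [hν, integral_map haddmeas.aemeasurable hLmeas.aestronglyMeasurable]
  have hmapLh : ∫ v, Lh v ∂ν = ∫ u, Lh (w + u) ∂μ := by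
    rw [hν, integral_map haddmeas.aemeasurable hLhmeas.aestronglyMeasurable]
  -- klDiv branch
  rw [klDiv]
  by_cases hkl : ν ≪ π ∧ Integrable (llr ν π) ν
  · rw [if_pos hkl]
    set KL : ℝ := ∫ x, llr ν π x ∂ν with hKL
    -- Donsker-Varadhan
    set F : (Fin m → ℝ) → ℝ := fun w' => η * (L w' - Lh w') with hF
    have hFmeas : Measurable F := (hLmeas.sub hLhmeas).const_mul η
    have hFbound : ∀ w', |F w'| ≤ η := by
      intro w'
      rw [hF]
      simp only
      rw [abs_mul, abs_of_pos hη]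
      have h1 := expLoss_mem (𝒟 := 𝒟) hℓmeas hℓ01 w'
      have h2 := empLoss_mem hℓ01 hn s w'
      have : |L w' - Lh w'| ≤ 1 := by
        rw [abs_le]; constructor <;> [linarith [h1.1, h2.2]; linarith [h1.2, h2.1]]
      calc η * |L w' - Lh w'| ≤ η * 1 := mul_le_mul_of_nonneg_left this hη.le
      _ = η := mul_one η
    have hdv := dv_bound ν π F hFmeas η hFbound hkl.1 hkl.2
    -- event property
    have hevent := hAprop s hsA
    have hFexp_int : Integrable (fun w' => Real.exp (F w')) π := by
      refine Integrable.mono' (integrable_const (Real.exp η))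
        (hFmeas.exp.aestronglyMeasurable) (Filter.Eventually.of_forall fun w' => ?_)
      rw [Real.norm_eq_abs, abs_of_pos (Real.exp_pos _)]
      exact Real.exp_le_exp.2 (abs_le.1 (hFbound w')).2
    have hlogbound : Real.log (∫ w', Real.exp (F w') ∂π) ≤ η^2/(2*n) + Real.log (1/δ) := by
      have hpos : 0 < ∫ w', Real.exp (F w') ∂π := integral_exp_pos hFexp_int
      have hle : ∫ w', Real.exp (F w') ∂π ≤ Real.exp (η^2/(2*n)) / δ := hevent
      calc Real.log (∫ w', Real.exp (F w') ∂π) ≤ Real.log (Real.exp (η^2/(2*n)) / δ) :=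
            Real.log_le_log hpos hle
      _ = η^2/(2*n) + Real.log (1/δ) := by
          rw [Real.log_div (Real.exp_ne_zero _) hδ.ne', Real.log_exp, one_div, Real.log_inv]
          ring
    -- integrals of F over ν
    have hiLν : Integrable L ν := by
      refine Integrable.mono' (integrable_const 1) hLmeas.aestronglyMeasurable
        (Filter.Eventually.of_forall fun w' => ?_)
      have := expLoss_mem (𝒟 := 𝒟) hℓmeas hℓ01 w'
      rw [Real.norm_eq_abs, abs_of_nonneg this.1]; exact this.2
    have hiLhν : Integrable Lh ν := by
      refine Integrable.mono' (integrable_const 1) hLhmeas.aestronglyMeasurable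
        (Filter.Eventually.of_forall fun w' => ?_)
      have := empLoss_mem hℓ01 hn s w'
      rw [Real.norm_eq_abs, abs_of_nonneg this.1]; exact this.2
    have hintF : ∫ w', F w' ∂ν = η * (∫ v, L v ∂ν - ∫ v, Lh v ∂ν) := by
      rw [hF]
      simp only
      rw [integral_const_mul, integral_sub hiLν hiLhν]
    -- combine
    have hmain : ∫ u, L (w + u) ∂μ ≤ Abound + (KL + Real.log (1/δ))/η + η/(2*n) := by
      rw [hintF] at hdv
      have h5 : η * (∫ v, L v ∂ν - ∫ v, Lh v ∂ν) ≤ KL + (η^2/(2*n) + Real.log (1/δ)) :=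
        le_trans hdv (by linarith [hlogbound])
      have h6 : ∫ v, L v ∂ν - ∫ v, Lh v ∂ν ≤ (KL + η^2/(2*n) + Real.log (1/δ))/η := by
        rw [le_div_iff₀ hη]
        linarith [h5]
      have h7 : (KL + η^2/(2*n) + Real.log (1/δ))/η = (KL + Real.log (1/δ))/η + η/(2*n) := by
        field_simp
        ring
      rw [h7] at h6
      rw [hmapL, hmapLh] at h6
      calc ∫ u, L (w + u) ∂μ
          = (∫ u, L (w + u) ∂μ - ∫ u, Lh (w + u) ∂μ) + ∫ u, Lh (w + u) ∂μ := by ring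
      _ ≤ ((KL + Real.log (1/δ))/η + η/(2*n)) + Abound := add_le_add h6 hLh_int
      _ = Abound + (KL + Real.log (1/δ))/η + η/(2*n) := by ring
    -- EReal conversion
    have herhs : ((Abound : ℝ) : EReal) + (((KL:ℝ) : EReal) + ((Real.log (1/δ) : ℝ) : EReal)) / (η : EReal)
        + ((η/(2*n) : ℝ) : EReal)
        = ((Abound + (KL + Real.log (1/δ))/η + η/(2*n) : ℝ) : EReal) := by
      rw [← EReal.coe_add KL (Real.log (1/δ)), ← EReal.coe_div, ← EReal.coe_add, ← EReal.coe_add]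
    rw [hAbound, hB2, hB3] at herhs
    rw [herhs]
    exact EReal.coe_le_coe_iff.2 (by rw [← hAbound, ← hB2, ← hB3] at *; exact hmain)
  · rw [if_neg hkl]
    have h1 : (⊤ : EReal) + ((Real.log (1/δ) : ℝ) : EReal) = ⊤ := EReal.top_add_coe _
    rw [h1]
    have h2 : (⊤ : EReal) / (η : EReal) = ⊤ :=
      EReal.top_div_of_pos_ne_top (by exact_mod_cast hη) (EReal.coe_ne_top η)
    rw [h2]
    have h3 : ∀ x : ℝ, (x : EReal) + ⊤ = ⊤ := fun x => EReal.coe_add_top x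
    rw [h3]
    rw [EReal.top_add_coe]
    exact le_top
end
end

section
/- (KL divergence after truncation). Let μ = ⊗_{i=1}^m N(w_i, σ_i²) be a product Gaussian on ℝ^m, let E = {v ∈ ℝ^m : |v_i − w_i| < κ_i for all i} be a box around w with Z = μ(E) ≥ 1/2, and let μ_E = μ(·|E) be the truncated (conditioned) measure. Then for any Gaussian prior π = N(0, τ·I_m), KL(μ_E‖π) ≤ 2·(KL(μ‖π) + 1). -/
open MeasureTheory ProbabilityTheory

noncomputable section

open scoped Classical

lemma aux_mul_log (t : ℝ) (ht : 0 ≤ t) : -Real.exp (-1) ≤ t * Real.log t := by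
  rcases eq_or_lt_of_le ht with h | h
  · simp [← h]
    exact (Real.exp_pos _).le
  · have h1 : -Real.log t ≤ t⁻¹ * Real.exp (-1) := by
      have h2 := Real.log_le_sub_one_of_pos (show (0:ℝ) < t⁻¹ * Real.exp (-1) by positivity)
      rw [Real.log_mul (by positivity) (Real.exp_ne_zero _), Real.log_inv, Real.log_exp] at h2
      linarith
    have h3 := mul_le_mul_of_nonneg_left h1 h.le
    rw [← mul_assoc, mul_inv_cancel₀ h.ne', one_mul] at h3
    nlinarith

lemma aux_ereal (K : ℝ) : (2 : EReal) * ((K:EReal) + 1) = ((2*(K+1) : ℝ) : EReal) := by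
  norm_cast

/-- **KL divergence after truncation**: let `μ = ⊗ᵢ N(wᵢ, σᵢ²)`, let
`E = {v : |vᵢ − wᵢ| < κᵢ ∀ i}` be a box with `Z = μ(E) ≥ 1/2`, and let `μ_E = μ(·|E)`
be the truncated measure. Then for the Gaussian prior `π = N(0, τ·I_m)`,
`KL(μ_E‖π) ≤ 2(KL(μ‖π) + 1)`. -/
theorem klDiv_truncation
    (m : ℕ) (w σ : Fin m → ℝ) (hσ : ∀ i, 0 < σ i) (κ : Fin m → ℝ) (τ : ℝ) (hτ : 0 < τ)
    (μ : Measure (Fin m → ℝ))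
    (hμ : μ = Measure.pi fun i => gaussianReal (w i) (Real.toNNReal ((σ i) ^ 2)))
    (E : Set (Fin m → ℝ)) (hE : E = {v | ∀ i, |v i - w i| < κ i})
    (hZ : (1 : ENNReal) / 2 ≤ μ E) :
    klDiv (ProbabilityTheory.cond μ E) (Measure.pi fun _ => gaussianReal 0 (Real.toNNReal τ))
      ≤ 2 * (klDiv μ (Measure.pi fun _ => gaussianReal 0 (Real.toNNReal τ)) + 1) := by
  set π : Measure (Fin m → ℝ) := Measure.pi fun _ => gaussianReal 0 (Real.toNNReal τ) with hπ
  have hμprob : IsProbabilityMeasure μ := by rw [hμ]; infer_instance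
  have hπprob : IsProbabilityMeasure π := by rw [hπ]; infer_instance
  by_cases h : μ ≪ π ∧ Integrable (llr μ π) μ
  swap
  · rw [show klDiv μ π = ⊤ from if_neg h,
      show ((1:EReal) = ((1:ℝ):EReal)) from rfl, EReal.top_add_coe,
      EReal.mul_top_of_pos (by norm_num)]
    exact le_top
  obtain ⟨hac, hint⟩ := h
  -- measurability of E
  have hEmeas : MeasurableSet E := by
    rw [hE, show {v : Fin m → ℝ | ∀ i, |v i - w i| < κ i}
        = ⋂ i, {v : Fin m → ℝ | |v i - w i| < κ i} by ext v; simp]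
    exact MeasurableSet.iInter fun i =>
      measurableSet_lt (((measurable_pi_apply i).sub measurable_const).abs) measurable_const
  -- basic facts about Z = μ E
  have hZ0 : μ E ≠ 0 := fun h0 => by simp [h0] at hZ
  have hZtop : μ E ≠ ⊤ := measure_ne_top μ E
  set Z : ℝ := (μ E).toReal with hZdef
  have hZhalf : (1:ℝ)/2 ≤ Z := by
    have := ENNReal.toReal_mono hZtop hZ
    simpa using this
  have hZ1 : Z ≤ 1 := by
    have := ENNReal.toReal_mono (by norm_num : (1:ENNReal) ≠ ⊤) (prob_le_one (μ := μ) (s := E))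
    simpa using this
  have hZpos : (0:ℝ) < Z := by linarith
  -- conditional measure basic structure
  have hcond_smul : ProbabilityTheory.cond μ E = (μ E)⁻¹ • μ.restrict E := rfl
  have hcondprob : IsProbabilityMeasure (ProbabilityTheory.cond μ E) :=
    cond_isProbabilityMeasure hZ0
  have hacE : ProbabilityTheory.cond μ E ≪ π := cond_absolutelyContinuous.trans hac
  have hacEμ : ProbabilityTheory.cond μ E ≪ μ := cond_absolutelyContinuous
  -- density of cond μ E wrt π
  have hmeas_ind : Measurable ((μ E)⁻¹ • E.indicator (μ.rnDeriv π)) :=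
    ((Measure.measurable_rnDeriv μ π).indicator hEmeas).const_smul _
  have hcond_eq : ProbabilityTheory.cond μ E
      = π.withDensity ((μ E)⁻¹ • E.indicator (μ.rnDeriv π)) := by
    rw [withDensity_smul _ ((Measure.measurable_rnDeriv μ π).indicator hEmeas),
      withDensity_indicator hEmeas, ← restrict_withDensity hEmeas,
      Measure.withDensity_rnDeriv_eq μ π hac, hcond_smul]
  have hrn : (ProbabilityTheory.cond μ E).rnDeriv π
      =ᵐ[π] (μ E)⁻¹ • E.indicator (μ.rnDeriv π) := by
    rw [hcond_eq]
    exact Measure.rnDeriv_withDensity π hmeas_ind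
  -- a.e. membership in E
  have hmemE : ∀ᵐ x ∂(ProbabilityTheory.cond μ E), x ∈ E := by
    rw [ae_iff]
    have : {x | ¬ x ∈ E} = Eᶜ := rfl
    rw [this, hcond_smul]
    simp [Measure.restrict_apply hEmeas.compl]
  -- llr of cond μ E
  have hllr : llr (ProbabilityTheory.cond μ E) π
      =ᵐ[ProbabilityTheory.cond μ E] fun x => llr μ π x - Real.log Z := by
    filter_upwards [hmemE, hacE.ae_le hrn, hacEμ.ae_le (Measure.rnDeriv_pos hac),
      hacEμ.ae_le (hac.ae_le (Measure.rnDeriv_lt_top μ π))] with x hxE hxrn hxpos hxlt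
    rw [llr, hxrn]
    simp only [Pi.smul_apply, smul_eq_mul, Set.indicator_of_mem hxE]
    rw [ENNReal.toReal_mul, Real.log_mul, ENNReal.toReal_inv, Real.log_inv, llr]
    · ring
    · simp [ENNReal.toReal_eq_zero_iff, hZ0, hZtop,
        ENNReal.inv_eq_zero, ENNReal.inv_eq_top]
    · simp [ENNReal.toReal_eq_zero_iff, hxpos.ne', hxlt.ne]
  -- integrability
  have hintE' : Integrable (llr μ π) (ProbabilityTheory.cond μ E) := by
    rw [hcond_smul]
    exact (hint.restrict).smul_measure (ENNReal.inv_ne_top.2 hZ0)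
  have hintE : Integrable (llr (ProbabilityTheory.cond μ E) π) (ProbabilityTheory.cond μ E) := by
    rw [integrable_congr hllr]
    exact hintE'.sub (integrable_const _)
  -- set K, A
  set K : ℝ := ∫ x, llr μ π x ∂μ with hK
  set A : ℝ := ∫ x in E, llr μ π x ∂μ with hA
  -- value of the conditional KL integral
  have hI : ∫ x, llr (ProbabilityTheory.cond μ E) π x ∂(ProbabilityTheory.cond μ E)
      = Z⁻¹ * A - Real.log Z := by
    rw [integral_congr_ae hllr, integral_sub hintE' (integrable_const _)]
    rw [integral_const, probReal_univ]
    rw [hcond_smul, integral_smul_measure, ENNReal.toReal_inv]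
    simp [smul_eq_mul]
    rfl
  -- Gibbs: 0 ≤ K
  have hKnonneg : 0 ≤ K := by
    have hπμint : Integrable (llr π μ) μ := (integrable_congr (neg_llr hac)).mp hint.neg
    have hderint : Integrable (fun x => (π.rnDeriv μ x).toReal) μ :=
      Measure.integrable_toReal_rnDeriv
    have hptwise : ∀ᵐ x ∂μ, llr π μ x ≤ (π.rnDeriv μ x).toReal - 1 := by
      filter_upwards [Measure.rnDeriv_pos' hac, Measure.rnDeriv_lt_top π μ] with x hxpos hxlt
      exact Real.log_le_sub_one_of_pos (ENNReal.toReal_pos hxpos.ne' hxlt.ne)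
    have h1 : ∫ x, llr π μ x ∂μ ≤ ∫ x, ((π.rnDeriv μ x).toReal - 1) ∂μ :=
      integral_mono_ae hπμint (hderint.sub (integrable_const _)) hptwise
    have h2 : ∫ x, ((π.rnDeriv μ x).toReal - 1) ∂μ
        = (∫ x, (π.rnDeriv μ x).toReal ∂μ) - 1 := by
      rw [integral_sub hderint (integrable_const _)]
      simp
    have h3 : ∫ x, (π.rnDeriv μ x).toReal ∂μ ≤ 1 := by
      have := Measure.setIntegral_toReal_rnDeriv_le (μ := π) (ν := μ) (s := Set.univ)
        (by simp : π Set.univ ≠ ⊤)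
      simpa using this
    have h4 : ∫ x, llr π μ x ∂μ = -K := by
      rw [hK, ← integral_neg]
      exact integral_congr_ae (neg_llr hac).symm
    linarith
  -- A ≤ K + exp(-1)
  have hAle : A ≤ K + Real.exp (-1) := by
    have hsplit : A + ∫ x in Eᶜ, llr μ π x ∂μ = K := integral_add_compl hEmeas hint
    have hcompl : -Real.exp (-1) ≤ ∫ x in Eᶜ, llr μ π x ∂μ := by
      rw [← MeasureTheory.setIntegral_rnDeriv_smul hac hEmeas.compl]
      have hgint : Integrable (fun x => (μ.rnDeriv π x).toReal • llr μ π x) π :=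
        (MeasureTheory.integrable_rnDeriv_smul_iff hac).2 hint
      have hlow : ∫ x in Eᶜ, (-(Real.exp (-1)) : ℝ) ∂π
          ≤ ∫ x in Eᶜ, (μ.rnDeriv π x).toReal • llr μ π x ∂π := by
        refine integral_mono_ae (integrable_const _) hgint.restrict (ae_of_all _ fun x => ?_)
        exact aux_mul_log _ ENNReal.toReal_nonneg
      have hconst : ∫ x in Eᶜ, (-(Real.exp (-1)) : ℝ) ∂π
          = (π Eᶜ).toReal * (-(Real.exp (-1))) := by
        rw [setIntegral_const]; rfl
      have hple : (π Eᶜ).toReal ≤ 1 := by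
        have := ENNReal.toReal_mono (by norm_num : (1:ENNReal) ≠ ⊤) (prob_le_one (μ := π) (s := Eᶜ))
        simpa using this
      nlinarith [Real.exp_pos (-1 : ℝ), ENNReal.toReal_nonneg (a := π Eᶜ)]
    linarith
  -- the real inequality
  have hreal : Z⁻¹ * A - Real.log Z ≤ 2 * (K + 1) := by
    have hlogZ : -Real.log Z ≤ Real.log 2 := by
      have h1 : Real.log ((1:ℝ)/2) ≤ Real.log Z := by
        apply Real.log_le_log (by norm_num) hZhalf
      have h2 : Real.log ((1:ℝ)/2) = -Real.log 2 := by
        rw [one_div, Real.log_inv]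
      linarith
    have hlog2 : Real.log 2 < 0.6931471808 := Real.log_two_lt_d9
    have hexp : Real.exp (-1) ≤ 1/2 := by
      rw [Real.exp_neg]
      have h2 : (2:ℝ) ≤ Real.exp 1 := by
        have := Real.add_one_le_exp (1:ℝ)
        linarith
      rw [inv_le_comm₀ (Real.exp_pos 1) (by norm_num)] at *
      · linarith
    have hZinv : Z⁻¹ ≤ 2 := by
      rw [inv_le_comm₀ hZpos (by norm_num)]
      linarith
    rcases le_or_gt A 0 with hA0 | hA0
    · have : Z⁻¹ * A ≤ 0 := mul_nonpos_of_nonneg_of_nonpos (inv_nonneg.2 hZpos.le) hA0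
      nlinarith
    · have : Z⁻¹ * A ≤ 2 * A := by
        apply mul_le_mul_of_nonneg_right hZinv hA0.le |>.trans_eq rfl
      nlinarith
  -- conclude
  rw [show klDiv μ π = ((K:ℝ):EReal) from if_pos ⟨hac, hint⟩,
    show klDiv (ProbabilityTheory.cond μ E) π = ((Z⁻¹ * A - Real.log Z : ℝ) : EReal) by
      rw [klDiv, if_pos ⟨hacE, hintE⟩, hI],
    aux_ereal]
  exact EReal.coe_le_coe_iff.2 hreal
end
end
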